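/- Let T be a finite plane tree with n ≥ 2 vertices, with mirrored enumeration w_0 = ∅, w_1, …, w_{n−1}, and let ι : T∖{∅} → (rot T)° be the unique lexicographic-order-preserving bijection from the non-root vertices of T onto the internal vertices of rot T. Then for all 1 ≤ k ≤ n−1, the height of ι(w_k) in rot T equals H_{T^÷}(k) + S_{T^÷}(k) − 1. -/

import Mathlib

inductive PTree : Type
  | node : List PTree → PTree

namespace PTree

instance : Inhabited PTree := ⟨node []⟩

mutual
def size : PTree → ℕ
  | node ts => 1 + sizeList ts
def sizeList : List PTree → ℕ
  | [] => 0
  | t :: ts => size t + sizeList ts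
end

def deg : PTree → ℕ
  | node ts => ts.length

mutual
def degreesAux : PTree → List ℕ
  | node ts => ts.length :: degreesListAux ts
def degreesListAux : List PTree → List ℕ
  | [] => []
  | t :: ts => degreesAux t ++ degreesListAux ts
end

mutual
def heightsAux : PTree → ℕ → List ℕ
  | node ts, d => d :: heightsListAux ts (d + 1)
def heightsListAux : List PTree → ℕ → List ℕ
  | [], _ => []
  | t :: ts, d => heightsAux t d ++ heightsListAux ts d
end

mutual
def contourAux : PTree → ℕ → List ℕ
  | node ts, d => d :: contourListAux ts (d + 1)
def contourListAux : List PTree → ℕ → List ℕ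
  | [], _ => []
  | t :: ts, d => contourAux t d ++ (d - 1) :: contourListAux ts d
end

mutual
def verticesAux : PTree → List ℕ → List (List ℕ)
  | node ts, p => p :: verticesListAux ts p 0
def verticesListAux : List PTree → List ℕ → ℕ → List (List ℕ)
  | [], _, _ => []
  | t :: ts, p, i => verticesAux t (p ++ [i]) ++ verticesListAux ts p (i + 1)
end

def vertices (T : PTree) : List (List ℕ) := verticesAux T []

/-- Height process of a plane tree. -/
def H (T : PTree) (k : ℕ) : ℕ := (heightsAux T 0).getD k 0

/-- Contour process of a plane tree. -/
def C (T : PTree) (k : ℕ) : ℕ := (contourAux T 0).getD k 0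

/-- Łukasiewicz walk of a plane tree. -/
def S (T : PTree) (k : ℕ) : ℤ :=
  (((degreesAux T).take k).map (fun d => (d : ℤ) - 1)).sum

def subtreeAt : List ℕ → PTree → Option PTree
  | [], t => some t
  | i :: p, node ts => (ts[i]?).bind (subtreeAt p)

def isInternal (T : PTree) (p : List ℕ) : Bool :=
  match subtreeAt p T with
  | some (node (_ :: _)) => true
  | _ => false

def isVertex (T : PTree) (p : List ℕ) : Bool := (subtreeAt p T).isSome

def rot : PTree → PTree
  | node [] => node []
  | node (t :: ts) => node [rot t, rot (node ts)]

mutual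
def corot : PTree → PTree
  | node ts => corotAux ts (node [])
def corotAux : List PTree → PTree → PTree
  | [], acc => acc
  | t :: ts, acc => corotAux ts (node [acc, corot t])
end

mutual
def mirror : PTree → PTree
  | node ts => node (mirrorList ts)
def mirrorList : List PTree → List PTree
  | [] => []
  | t :: ts => mirrorList ts ++ [mirror t]
end

mutual
def internalTree : PTree → PTree
  | node ts => node (internalList ts)
def internalList : List PTree → List PTree
  | [] => []
  | node [] :: ts => internalList ts
  | t :: ts => internalTree t :: internalList ts
end

def mirrorPath : PTree → List ℕ → List ℕ
  | _, [] => []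
  | node ts, i :: p =>
      (ts.length - 1 - i) ::
        (match ts[i]? with
         | some t => mirrorPath t p
         | none => p)

def lexLt : List ℕ → List ℕ → Bool
  | _, [] => false
  | [], _ :: _ => true
  | a :: as, b :: bs => if a < b then true else if a = b then lexLt as bs else false

def nonRootVertices (T : PTree) : List (List ℕ) := (vertices T).tail

def internalVertices (T : PTree) : List (List ℕ) :=
  (vertices T).filter (fun p => isInternal T p)

/-- the order-preserving identification between non-root vertices of `T` and
internal vertices of `rot T`. -/
def iota (T : PTree) (u : List ℕ) : List ℕ :=
  (internalVertices (rot T)).getD ((nonRootVertices T).idxOf u) []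

/-- `L(u)`: number of edges grafted on the left of the ancestral line of `u`. -/
def Lnum (T : PTree) (u : List ℕ) : ℕ :=
  ((vertices T).filter (fun w =>
      !w.isEmpty && (w.dropLast.isPrefixOf u && w.dropLast != u)
        && !(w.isPrefixOf u && w != u) && lexLt w u)).length

/-- mirrored enumeration of `T`. -/
def mirroredEnum (T : PTree) (k : ℕ) : List ℕ :=
  mirrorPath (mirror T) ((vertices (mirror T)).getD k [])

def descendR (T : PTree) : ℕ → List ℕ → List ℕ
  | 0, p => p
  | fuel + 1, p => if isInternal T (p ++ [1]) then descendR T fuel (p ++ [1]) else p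

def ascend (visited : List (List ℕ)) : ℕ → List ℕ → List ℕ
  | 0, p => p.dropLast
  | fuel + 1, p => if p.dropLast ∈ visited then ascend visited fuel p.dropLast else p.dropLast

def rightmostSeq (T : PTree) : ℕ → List (List ℕ)
  | 0 => []
  | k + 1 =>
      let prev := rightmostSeq T k
      let next :=
        match prev.getLast? with
        | none => descendR T (size T) []
        | some p =>
            if isInternal T (p ++ [0]) then descendR T (size T) (p ++ [0])
            else ascend prev (size T) p
      prev ++ [next]

def Hstar (T : PTree) (k : ℕ) : ℤ :=
  if k = 0 ∨ size T ≤ k then 0 else ((iota T (mirroredEnum T k)).length : ℤ)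

end PTree

open PTree

namespace PTree

theorem size_def (ts : List PTree) : size (node ts) = 1 + sizeList ts := rfl

theorem S_eq (T : PTree) (k : ℕ) :
    S T k = (((degreesAux T).take k).map (fun d : ℕ => (d : ℤ) - 1)).sum := by
  rw [S]
  generalize (degreesAux T).take k = l
  induction l with
  | nil => rfl
  | cons a l ih => simpa using ih

theorem size_pos (t : PTree) : 0 < size t := by
  obtain ⟨ts⟩ := t; rw [size_def]; omega

theorem sizeList_append (l1 l2 : List PTree) :
    sizeList (l1 ++ l2) = sizeList l1 + sizeList l2 := by
  induction l1 with
  | nil => simp [sizeList]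
  | cons t ts ih => simp [sizeList, ih]; ring

mutual
theorem size_mirror : ∀ t : PTree, size (mirror t) = size t
  | node ts => by rw [mirror, size_def, size_def, sizeList_mirrorList]
theorem sizeList_mirrorList : ∀ ts : List PTree, sizeList (mirrorList ts) = sizeList ts
  | [] => rfl
  | t :: ts => by
      rw [mirrorList, sizeList_append, sizeList_mirrorList ts]
      simp [sizeList, size_mirror t]; ring
end

theorem mirrorList_eq : ∀ ts : List PTree, mirrorList ts = (ts.map mirror).reverse
  | [] => rfl
  | t :: ts => by rw [mirrorList, mirrorList_eq ts]; simp

theorem mirrorList_append (a b : List PTree) :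
    mirrorList (a ++ b) = mirrorList b ++ mirrorList a := by
  induction a with
  | nil => simp [mirrorList]
  | cons t ts ih => rw [List.cons_append, mirrorList, mirrorList, ih, List.append_assoc]

mutual
theorem mirror_mirror : ∀ t : PTree, mirror (mirror t) = t
  | node ts => by rw [mirror, mirror, mirrorList_mirrorList]
theorem mirrorList_mirrorList : ∀ ts : List PTree, mirrorList (mirrorList ts) = ts
  | [] => rfl
  | t :: ts => by
      rw [mirrorList, mirrorList_append, mirrorList, mirrorList, mirrorList_mirrorList ts,
        mirror_mirror t]
      rfl
end

mutual
theorem length_heightsAux : ∀ (t : PTree) (d : ℕ), (heightsAux t d).length = size t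
  | node ts, d => by rw [heightsAux, size_def]; simp [length_heightsListAux ts]; omega
theorem length_heightsListAux : ∀ (ts : List PTree) (d : ℕ),
    (heightsListAux ts d).length = sizeList ts
  | [], _ => rfl
  | t :: ts, d => by
      rw [heightsListAux, sizeList]
      simp [length_heightsAux t, length_heightsListAux ts]
end

mutual
theorem length_degreesAux : ∀ t : PTree, (degreesAux t).length = size t
  | node ts => by rw [degreesAux, size_def]; simp [length_degreesListAux ts]; ring
theorem length_degreesListAux : ∀ ts : List PTree,
    (degreesListAux ts).length = sizeList ts
  | [] => rfl
  | t :: ts => by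
      rw [degreesListAux, sizeList]
      simp [length_degreesAux t, length_degreesListAux ts]
end

mutual
theorem length_verticesAux : ∀ (t : PTree) (p : List ℕ), (verticesAux t p).length = size t
  | node ts, p => by rw [verticesAux, size_def]; simp [length_verticesListAux ts]; omega
theorem length_verticesListAux : ∀ (ts : List PTree) (p : List ℕ) (i : ℕ),
    (verticesListAux ts p i).length = sizeList ts
  | [], _, _ => rfl
  | t :: ts, p, i => by
      rw [verticesListAux, sizeList]
      simp [length_verticesAux t, length_verticesListAux ts]
end

theorem length_vertices (t : PTree) : (vertices t).length = size t :=
  length_verticesAux t []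

mutual
theorem sum_degreesAux : ∀ t : PTree,
    (((degreesAux t).map (fun d : ℕ => (d : ℤ) - 1)).sum) = -1
  | node ts => by
      rw [degreesAux, List.map_cons, List.sum_cons, sum_degreesListAux ts]
      ring
theorem sum_degreesListAux : ∀ ts : List PTree,
    (((degreesListAux ts).map (fun d : ℕ => (d : ℤ) - 1)).sum) = -(ts.length : ℤ)
  | [] => rfl
  | t :: ts => by
      rw [degreesListAux, List.map_append, List.sum_append, sum_degreesAux t,
        sum_degreesListAux ts, List.length_cons]
      push_cast
      ring
end

mutual
theorem heightsAux_shift : ∀ (t : PTree) (d : ℕ),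
    heightsAux t d = (heightsAux t 0).map (d + ·)
  | node ts, d => by
      rw [heightsAux, heightsAux, heightsListAux_shift ts (d+1), heightsListAux_shift ts 1]
      simp [Function.comp, Nat.add_assoc]
theorem heightsListAux_shift : ∀ (ts : List PTree) (d : ℕ),
    heightsListAux ts d = (heightsListAux ts 0).map (d + ·)
  | [], _ => rfl
  | t :: ts, d => by
      rw [heightsListAux, heightsListAux, heightsAux_shift t d, heightsListAux_shift ts d]
      simp
end

end PTree
namespace PTree

mutual
def fT : PTree → List ℤ
  | node ms => fL ms (ms.length : ℤ)
def fL : List PTree → ℤ → List ℤ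
  | [], _ => []
  | t :: ts, c => ((c - 1) :: (fT t).map (· + c)) ++ fL ts (c - 1)
end

mutual
theorem length_fT : ∀ t : PTree, (fT t).length = size t - 1
  | node ms => by rw [fT, size_def, length_fL ms]; omega
theorem length_fL : ∀ (ts : List PTree) (c : ℤ), (fL ts c).length = sizeList ts
  | [], _ => rfl
  | t :: ts, c => by
      rw [fL, sizeList]
      have := size_pos t
      simp [length_fT t, length_fL ts]
      omega
end

theorem decomp (ms : List PTree) (k : ℕ) (hk : k < sizeList ms) :
    ∃ j k', ∃ h : j < ms.length, k' < size ms[j] ∧ k = sizeList (ms.take j) + k' := by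
  induction ms generalizing k with
  | nil => simp [sizeList] at hk
  | cons t ts ih =>
      by_cases h : k < size t
      · exact ⟨0, k, by simp, h, by simp [sizeList]⟩
      · rw [sizeList] at hk
        obtain ⟨j, k', hj, hk', hsum⟩ := ih (k - size t) (by omega)
        exact ⟨j + 1, k', by simpa using hj, hk',
          by simp [List.take_succ_cons, sizeList]; omega⟩

theorem fL_getD (ms : List PTree) (c : ℤ) (j k' : ℕ) (hj : j < ms.length)
    (hk' : k' < size ms[j]) :
    (fL ms c).getD (sizeList (ms.take j) + k') 0 =
      if k' = 0 then c - j - 1 else (fT ms[j]).getD (k' - 1) 0 + (c - j) := by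
  induction ms generalizing c j with
  | nil => simp at hj
  | cons t ts ih =>
      match j with
      | 0 =>
          simp only [List.take_zero, sizeList, Nat.zero_add, List.getElem_cons_zero] at hk' ⊢
          rw [fL]
          rcases Nat.eq_zero_or_pos k' with h0 | h0
          · subst h0; simp
          · rw [List.getD_append _ _ _ _ (by simp [length_fT t]; omega)]
            have hne : k' ≠ 0 := by omega
            simp only [hne, if_false]
            obtain ⟨k'', rfl⟩ : ∃ k'', k' = k'' + 1 := ⟨k' - 1, by omega⟩
            rw [List.getD_cons_succ, Nat.add_sub_cancel]
            have hlt : k'' < (fT t).length := by rw [length_fT t]; omega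
            rw [List.getD_eq_getElem _ _ (by simpa using hlt), List.getElem_map,
              List.getD_eq_getElem _ _ hlt]
            push_cast; ring
      | j + 1 =>
          simp only [List.getElem_cons_succ] at hk'
          rw [List.take_succ_cons, sizeList, fL]
          have hlen : ((c - 1) :: (fT t).map (· + c)).length = size t := by
            have := size_pos t
            simp [length_fT t]; omega
          rw [Nat.add_assoc, List.getD_append_right _ _ _ _ (by omega)]
          rw [hlen, Nat.add_sub_cancel_left, ih (c - 1) j (by simpa using hj) hk']
          have : ((c - 1) - (j : ℤ)) = c - (j + 1 : ℕ) := by push_cast; ring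
          simp only [show 1 + j = j + 1 from Nat.add_comm 1 j, List.getElem_cons_succ]
          split <;> push_cast <;> ring

end PTree
namespace PTree

theorem size_le_sizeList {t : PTree} : ∀ {ts : List PTree}, t ∈ ts → size t ≤ sizeList ts
  | a :: l, h => by
      rw [sizeList]
      rcases List.mem_cons.mp h with rfl | h
      · omega
      · have := size_le_sizeList h
        omega

theorem heights_access (ms : List PTree) (d : ℕ) (j k' : ℕ) (hj : j < ms.length)
    (hk' : k' < size ms[j]) :
    (heightsListAux ms d).getD (sizeList (ms.take j) + k') 0 =
      d + (heightsAux ms[j] 0).getD k' 0 := by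
  induction ms generalizing j with
  | nil => simp at hj
  | cons t ts ih =>
      match j with
      | 0 =>
          simp only [List.getElem_cons_zero] at hk' ⊢
          rw [heightsListAux, List.take_zero, sizeList, Nat.zero_add,
            List.getD_append _ _ _ _ (by rw [length_heightsAux]; exact hk'),
            heightsAux_shift t d]
          have hlt : k' < (heightsAux t 0).length := by rw [length_heightsAux]; exact hk'
          rw [List.getD_eq_getElem _ _ (by simpa using hlt), List.getElem_map,
            List.getD_eq_getElem _ _ hlt]
      | j + 1 =>
          simp only [List.getElem_cons_succ] at hk' ⊢
          rw [heightsListAux, List.take_succ_cons, sizeList, Nat.add_assoc,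
            List.getD_append_right _ _ _ _ (by rw [length_heightsAux]; omega),
            length_heightsAux, Nat.add_sub_cancel_left]
          exact ih j (by simpa using hj) hk'

theorem degrees_access (ms : List PTree) (j k' : ℕ) (hj : j < ms.length)
    (hk' : k' < size ms[j]) :
    (((degreesListAux ms).take (sizeList (ms.take j) + k')).map
        (fun d : ℕ => (d : ℤ) - 1)).sum =
      (((degreesAux ms[j]).take k').map (fun d : ℕ => (d : ℤ) - 1)).sum - j := by
  induction ms generalizing j with
  | nil => simp at hj
  | cons t ts ih =>
      match j with
      | 0 =>
          simp only [List.getElem_cons_zero] at hk' ⊢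
          rw [degreesListAux, List.take_zero, sizeList, Nat.zero_add,
            List.take_append,
            Nat.sub_eq_zero_of_le (by rw [length_degreesAux]; omega), List.take_zero,
            List.append_nil]
          simp
      | j + 1 =>
          simp only [List.getElem_cons_succ] at hk' ⊢
          rw [degreesListAux, List.take_succ_cons, sizeList, Nat.add_assoc,
            List.take_append, length_degreesAux,
            List.take_of_length_le (by rw [length_degreesAux]; omega),
            Nat.add_sub_cancel_left, List.map_append, List.sum_append,
            sum_degreesAux t, ih j (by simpa using hj) hk']
          push_cast; ring

theorem RHS_tree : ∀ (n : ℕ) (M : PTree) (k : ℕ), size M ≤ n → 1 ≤ k → k < size M →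
    (H M k : ℤ) + S M k = (fT M).getD (k - 1) 0 + 1
  | 0, M, k, hn, _, _ => absurd (size_pos M) (by omega)
  | n + 1, node ms, k, hn, hk1, hk2 => by
      rw [size_def] at hn hk2
      obtain ⟨j, k', hj, hk', hsum⟩ := decomp ms (k - 1) (by omega)
      have hmem : ms[j] ∈ ms := List.getElem_mem hj
      have hsz : size ms[j] ≤ sizeList ms := size_le_sizeList hmem
      -- H part
      have hH : (H (node ms) k : ℤ) = 1 + ((heightsAux ms[j] 0).getD k' 0 : ℕ) := by
        rw [H, heightsAux]
        obtain ⟨k0, rfl⟩ : ∃ k0, k = k0 + 1 := ⟨k - 1, by omega⟩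
        simp only [Nat.add_sub_cancel] at hsum
        rw [List.getD_cons_succ, hsum, heights_access ms 1 j k' hj hk']
        push_cast; ring
      -- S part
      have hS : S (node ms) k =
          (((degreesAux ms[j]).take k').map (fun d : ℕ => (d : ℤ) - 1)).sum
            + (ms.length : ℤ) - 1 - j := by
        rw [S_eq, degreesAux]
        obtain ⟨k0, rfl⟩ : ∃ k0, k = k0 + 1 := ⟨k - 1, by omega⟩
        simp only [Nat.add_sub_cancel] at hsum
        rw [List.take_succ_cons, List.map_cons, List.sum_cons, hsum,
          degrees_access ms j k' hj hk']
        push_cast; ring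
      rw [hH, hS, hsum, fT, fL_getD ms (ms.length : ℤ) j k' hj hk']
      rcases Nat.eq_zero_or_pos k' with h0 | h0
      · subst h0
        have : (heightsAux ms[j] 0).getD 0 0 = 0 := by
          obtain ⟨ns⟩ := ms[j]; rw [heightsAux]; rfl
        rw [this]
        rw [if_pos rfl]
        simp only [List.take_zero, List.map_nil, List.sum_nil, Nat.cast_zero]
        ring
      · have hne : k' ≠ 0 := by omega
        simp only [hne, if_false]
        have hIH := RHS_tree n ms[j] k' (by omega) h0 hk'
        rw [H, S_eq] at hIH
        push_cast
        push_cast at hIH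
        linarith [hIH]

end PTree
namespace PTree

mutual
theorem verticesAux_map : ∀ (t : PTree) (p : List ℕ),
    verticesAux t p = (verticesAux t []).map (p ++ ·)
  | node ts, p => by
      rw [verticesAux, verticesAux, verticesListAux_map ts p,
        verticesListAux_map ts []]
      simp
theorem verticesListAux_map : ∀ (ts : List PTree) (p : List ℕ) (i : ℕ),
    verticesListAux ts p i = (verticesListAux ts [] i).map (p ++ ·)
  | [], _, _ => by rw [verticesListAux, verticesListAux]; rfl
  | t :: ts, p, i => by
      rw [verticesListAux, verticesListAux, verticesAux_map t (p ++ [i]),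
        verticesAux_map t ([] ++ [i]), verticesListAux_map ts p (i + 1),
        verticesListAux_map ts [] (i + 1)]
      simp
end

theorem vertices_def (ts : List PTree) :
    vertices (node ts) = [] :: verticesListAux ts [] 0 := rfl

theorem vertices_access (ms : List PTree) (i j k' : ℕ) (hj : j < ms.length)
    (hk' : k' < size ms[j]) :
    (verticesListAux ms [] i).getD (sizeList (ms.take j) + k') [] =
      (i + j) :: (vertices ms[j]).getD k' [] := by
  induction ms generalizing i j with
  | nil => simp at hj
  | cons t ts ih =>
      match j with
      | 0 =>
          simp only [List.getElem_cons_zero] at hk' ⊢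
          rw [verticesListAux, List.take_zero, sizeList, Nat.zero_add,
            List.getD_append _ _ _ _ (by rw [length_verticesAux]; exact hk'),
            verticesAux_map t ([] ++ [i])]
          have hlt : k' < (verticesAux t []).length := by rw [length_verticesAux]; exact hk'
          rw [List.getD_eq_getElem _ _ (by simpa using hlt), List.getElem_map]
          simp only [List.nil_append, List.singleton_append, Nat.add_zero]
          rw [vertices, List.getD_eq_getElem _ _ hlt]
      | j + 1 =>
          simp only [List.getElem_cons_succ] at hk' ⊢
          rw [verticesListAux, List.take_succ_cons, sizeList, Nat.add_assoc,
            List.getD_append_right _ _ _ _ (by rw [length_verticesAux]; omega),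
            length_verticesAux, Nat.add_sub_cancel_left,
            ih (i + 1) j (by simpa using hj) hk']
          congr 1
          omega

theorem mem_verticesListAux {w : List ℕ} : ∀ {ms : List PTree} {i : ℕ},
    w ∈ verticesListAux ms [] i →
      ∃ j, ∃ _ : j < ms.length, ∃ p, w = (i + j) :: p ∧ p ∈ vertices ms[j]
  | t :: ts, i, hw => by
      rw [verticesListAux, List.mem_append, verticesAux_map t ([] ++ [i])] at hw
      rcases hw with hw | hw
      · simp only [List.mem_map] at hw
        obtain ⟨p, hp, rfl⟩ := hw
        exact ⟨0, by simp, p, by simp, by simpa [vertices] using hp⟩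
      · obtain ⟨j, hj, p, rfl, hp⟩ := mem_verticesListAux hw
        exact ⟨j + 1, by simpa using hj, p, by rw [show i + (j+1) = i+1+j by omega],
          by simpa using hp⟩

theorem verticesListAux_mem_of (ms : List PTree) (i j : ℕ) (hj : j < ms.length)
    {p : List ℕ} (hp : p ∈ vertices ms[j]) :
    (i + j) :: p ∈ verticesListAux ms [] i := by
  induction ms generalizing i j with
  | nil => simp at hj
  | cons t ts ih =>
      rw [verticesListAux, List.mem_append]
      match j with
      | 0 =>
          left
          rw [verticesAux_map t ([] ++ [i]), List.mem_map]
          exact ⟨p, by simpa [vertices] using hp, by simp⟩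
      | j + 1 =>
          right
          rw [show i + (j + 1) = (i + 1) + j by omega]
          exact ih (i + 1) j (by simpa using hj) (by simpa using hp)

theorem mem_vertices_node {ms : List PTree} {j : ℕ} {p : List ℕ} :
    (j :: p) ∈ vertices (node ms) ↔ ∃ _ : j < ms.length, p ∈ vertices ms[j] := by
  rw [vertices_def, List.mem_cons]
  constructor
  · rintro (h | h)
    · simp at h
    · obtain ⟨j', hj', p', hjp, hp'⟩ := mem_verticesListAux h
      simp only [Nat.zero_add] at hjp
      obtain ⟨rfl, rfl⟩ : j = j' ∧ p = p' := by
        injection hjp with h1 h2; exact ⟨h1, h2⟩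
      exact ⟨hj', hp'⟩
  · rintro ⟨hj, hp⟩
    right
    simpa using verticesListAux_mem_of ms 0 j hj hp

theorem mirrorPath_nil (t : PTree) : mirrorPath t [] = [] := by
  obtain ⟨ts⟩ := t; rfl

theorem mirrorPath_cons (ms : List PTree) (j : ℕ) (p : List ℕ) (hj : j < ms.length) :
    mirrorPath (node ms) (j :: p) = (ms.length - 1 - j) :: mirrorPath ms[j] p := by
  rw [mirrorPath, List.getElem?_eq_getElem hj]

theorem length_mirrorList (ms : List PTree) : (mirrorList ms).length = ms.length := by
  rw [mirrorList_eq]; simp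

theorem getElem_idx_congr {α} (l : List α) {a b : ℕ} (h : a = b) (ha : a < l.length) :
    l[a]'ha = l[b]'(h ▸ ha) := by subst h; rfl

theorem getElem_mirrorList (ms : List PTree) (j : ℕ) (hj : j < ms.length) :
    (mirrorList ms)[ms.length - 1 - j]'(by rw [length_mirrorList]; omega) =
      mirror ms[j] := by
  have h1 : mirrorList ms = (ms.map mirror).reverse := mirrorList_eq ms
  have h2 : ms.length - 1 - j < ((ms.map mirror).reverse).length := by simp; omega
  have h3 : (mirrorList ms)[ms.length - 1 - j]'(by rw [length_mirrorList]; omega)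
      = ((ms.map mirror).reverse)[ms.length - 1 - j]'h2 := by
    congr 1
  rw [h3, List.getElem_reverse, List.getElem_map]
  congr 1
  apply getElem_idx_congr
  simp only [List.length_map]
  omega

theorem mem_root_vertices (t : PTree) : ([] : List ℕ) ∈ vertices t := by
  obtain ⟨ts⟩ := t; rw [vertices_def]; simp

theorem mirrorPath_mem : ∀ (n : ℕ) (M : PTree) (v : List ℕ), size M ≤ n →
    v ∈ vertices M → mirrorPath M v ∈ vertices (mirror M)
  | 0, M, v, hn, _ => absurd (size_pos M) (by omega)
  | n + 1, node ms, v, hn, hv => by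
      match v with
      | [] => rw [mirrorPath_nil]; exact mem_root_vertices _
      | j :: p =>
          obtain ⟨hj, hp⟩ := mem_vertices_node.mp hv
          rw [mirrorPath_cons ms j p hj, mirror]
          have hi0 : ms.length - 1 - j < (mirrorList ms).length := by
            rw [length_mirrorList]; omega
          apply mem_vertices_node.mpr
          refine ⟨hi0, ?_⟩
          rw [getElem_mirrorList ms j hj]
          have hsz : size ms[j] ≤ n := by
            have : size ms[j] ≤ sizeList ms := size_le_sizeList (List.getElem_mem hj)
            rw [size_def] at hn; omega
          exact mirrorPath_mem n ms[j] p hsz hp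

end PTree
namespace PTree

section IndexOfBEq
variable {α : Type*} [BEq α] [LawfulBEq α]

theorem idx_cons (a b : α) (l : List α) :
    List.idxOf a (b :: l) = if b == a then 0 else List.idxOf a l + 1 := by
  simp [List.idxOf_cons, cond_eq_if]

theorem idx_append_left {a : α} {l1 : List α} (h : a ∈ l1) (l2 : List α) :
    List.idxOf a (l1 ++ l2) = List.idxOf a l1 := by
  induction l1 with
  | nil => simp at h
  | cons b l ih =>
      rw [List.cons_append, idx_cons, idx_cons]
      by_cases hba : b == a
      · rw [if_pos hba, if_pos hba]
      · rw [if_neg hba, if_neg hba, ih]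
        rcases List.mem_cons.mp h with rfl | h
        · simp at hba
        · exact h

theorem idx_append_right {a : α} {l1 : List α} (h : a ∉ l1) (l2 : List α) :
    List.idxOf a (l1 ++ l2) = l1.length + List.idxOf a l2 := by
  induction l1 with
  | nil => simp
  | cons b l ih =>
      rw [List.cons_append, idx_cons]
      have hba : ¬ (b == a) = true := by
        simp only [beq_iff_eq]
        rintro rfl
        exact h (by simp)
      rw [if_neg hba, List.length_cons, ih (fun hm => h (List.mem_cons_of_mem _ hm))]
      omega

theorem idx_lt_length {a : α} {l : List α} (h : a ∈ l) :
    List.idxOf a l < l.length := by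
  induction l with
  | nil => simp at h
  | cons b l ih =>
      rw [idx_cons]
      by_cases hba : b == a
      · rw [if_pos hba]; simp
      · rw [if_neg hba, List.length_cons]
        have : a ∈ l := by
          rcases List.mem_cons.mp h with rfl | h
          · simp at hba
          · exact h
        exact Nat.add_lt_add_right (ih this) 1

end IndexOfBEq

end PTree
namespace PTree

theorem isInternal_cons (cs : List PTree) (i : ℕ) (p : List ℕ) (h : i < cs.length) :
    isInternal (node cs) (i :: p) = isInternal cs[i] p := by
  simp only [isInternal, subtreeAt, List.getElem?_eq_getElem h, Option.bind_some]

theorem verticesAux_single (t : PTree) (i : ℕ) :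
    verticesAux t [i] = (vertices t).map (i :: ·) := by
  rw [verticesAux_map t [i], vertices]
  simp

theorem IV_pair (A B : PTree) :
    internalVertices (node [A, B]) =
      [] :: ((internalVertices A).map (0 :: ·) ++ (internalVertices B).map (1 :: ·)) := by
  rw [internalVertices, vertices_def, verticesListAux, verticesListAux, verticesListAux,
    List.append_nil, List.filter_cons]
  have hroot : isInternal (node [A, B]) [] = true := rfl
  rw [hroot]
  simp only [List.nil_append, List.filter_append]
  rw [verticesAux_single A 0, verticesAux_single B 1, List.filter_map, List.filter_map,
    if_pos trivial, internalVertices, internalVertices]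
  rfl

theorem rot_nil : rot (node []) = node [] := by rw [rot]

theorem IV_rot_nil : internalVertices (rot (node [])) = [] := by rw [rot_nil]; rfl

theorem IV_rot_cons (t : PTree) (ts : List PTree) :
    internalVertices (rot (node (t :: ts))) =
      [] :: ((internalVertices (rot t)).map (0 :: ·)
        ++ (internalVertices (rot (node ts))).map (1 :: ·)) := by
  rw [rot]; exact IV_pair _ _

theorem length_IV_rot : ∀ (n : ℕ) (t : PTree), size t ≤ n →
    (internalVertices (rot t)).length = size t - 1
  | 0, t, hn => absurd (size_pos t) (by omega)
  | n + 1, node [], hn => by rw [IV_rot_nil]; rfl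
  | n + 1, node (t :: ts), hn => by
      rw [size_def, sizeList] at hn ⊢
      have h1 : size t ≤ n := by
        have := size_pos (node ts); rw [size_def] at this; omega
      have h2 : size (node ts) ≤ n := by
        have := size_pos t; rw [size_def]; omega
      rw [IV_rot_cons, List.length_cons, List.length_append, List.length_map,
        List.length_map, length_IV_rot n t h1, length_IV_rot n (node ts) h2, size_def]
      have := size_pos t
      omega

/-- lengths of internal vertices of the rotation -/
def ivl (t : PTree) : List ℕ := (internalVertices (rot t)).map List.length

theorem length_ivl (t : PTree) : (ivl t).length = size t - 1 := by
  rw [ivl, List.length_map, length_IV_rot (size t) t le_rfl]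

theorem ivl_cons (t : PTree) (ts : List PTree) :
    ivl (node (t :: ts)) =
      0 :: ((ivl t).map (· + 1) ++ (ivl (node ts)).map (· + 1)) := by
  rw [ivl, IV_rot_cons, List.map_cons, List.map_append, List.map_map, List.map_map, ivl, ivl,
    List.map_map, List.map_map]
  refine congrArg₂ _ rfl (congrArg₂ _ ?_ ?_) <;>
    · apply List.map_congr_left
      intro p _
      simp [Function.comp]

theorem sizeList_take_le (ts : List PTree) (i0 : ℕ) (h : i0 < ts.length) :
    sizeList (ts.take i0) + size ts[i0] ≤ sizeList ts := by
  induction ts generalizing i0 with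
  | nil => simp at h
  | cons t l ih =>
      match i0 with
      | 0 => simp only [List.take_zero, List.getElem_cons_zero, sizeList]; omega
      | i0 + 1 =>
          rw [List.take_succ_cons, sizeList, sizeList, List.getElem_cons_succ]
          have := ih i0 (by simpa using h)
          omega

theorem getD_map_add (l : List ℕ) (q : ℕ) (hq : q < l.length) :
    ((l.map (· + 1)).getD q 0) = l.getD q 0 + 1 := by
  rw [List.getD_eq_getElem _ _ (by simpa using hq), List.getElem_map,
    List.getD_eq_getElem _ _ hq]

theorem ivl_access_root (us : List PTree) (i0 : ℕ) (hi : i0 < us.length) :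
    (ivl (node us)).getD (sizeList (us.take i0)) 0 = i0 := by
  induction us generalizing i0 with
  | nil => simp at hi
  | cons t ts ih =>
      match i0 with
      | 0 => rw [ivl_cons, List.take_zero]; rfl
      | i0 + 1 =>
          rw [ivl_cons, List.take_succ_cons, sizeList]
          have hpos := size_pos t
          obtain ⟨s, hs⟩ : ∃ s, size t = s + 1 := ⟨size t - 1, by omega⟩
          rw [hs, show s + 1 + sizeList (ts.take i0) = (s + sizeList (ts.take i0)) + 1 by omega,
            List.getD_cons_succ,
            List.getD_append_right _ _ _ _ (by rw [List.length_map, length_ivl]; omega),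
            List.length_map, length_ivl, hs]
          rw [show s + sizeList (ts.take i0) - (s + 1 - 1) = sizeList (ts.take i0) by omega]
          have hi' : i0 < ts.length := by simpa using hi
          have hlt : sizeList (ts.take i0) < (ivl (node ts)).length := by
            rw [length_ivl, size_def]
            have h2 := sizeList_take_le ts i0 hi'
            have := size_pos (ts[i0]'hi')
            omega
          rw [getD_map_add _ _ hlt, ih i0 hi']

theorem ivl_access_inner (us : List PTree) (i0 : ℕ) (hi : i0 < us.length)
    (q : ℕ) (hq : q < size us[i0] - 1) :
    (ivl (node us)).getD (sizeList (us.take i0) + 1 + q) 0 = (i0 + 1) + (ivl us[i0]).getD q 0 := by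
  induction us generalizing i0 with
  | nil => simp at hi
  | cons t ts ih =>
      match i0 with
      | 0 =>
          simp only [List.getElem_cons_zero] at hq ⊢
          rw [ivl_cons, List.take_zero]
          show (0 :: _).getD (0 + 1 + q) 0 = _
          rw [show 0 + 1 + q = q + 1 by omega, List.getD_cons_succ,
            List.getD_append _ _ _ _ (by rw [List.length_map, length_ivl]; omega)]
          have hlt : q < (ivl t).length := by rw [length_ivl]; omega
          rw [getD_map_add _ _ hlt]
          omega
      | i0 + 1 =>
          simp only [List.getElem_cons_succ] at hq ⊢
          rw [ivl_cons, List.take_succ_cons, sizeList]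
          have hpos := size_pos t
          obtain ⟨s, hs⟩ : ∃ s, size t = s + 1 := ⟨size t - 1, by omega⟩
          rw [hs, show s + 1 + sizeList (ts.take i0) + 1 + q
              = (s + (sizeList (ts.take i0) + 1 + q)) + 1 by omega,
            List.getD_cons_succ,
            List.getD_append_right _ _ _ _ (by rw [List.length_map, length_ivl, hs]; omega),
            List.length_map, length_ivl, hs,
            show s + (sizeList (ts.take i0) + 1 + q) - (s + 1 - 1)
              = sizeList (ts.take i0) + 1 + q by omega]
          have hi' : i0 < ts.length := by simpa using hi
          have hlt : sizeList (ts.take i0) + 1 + q < (ivl (node ts)).length := by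
            rw [length_ivl, size_def]
            have h2 := sizeList_take_le ts i0 hi'
            omega
          rw [getD_map_add _ _ hlt, ih i0 hi' hq]
          omega

theorem idxOf_map_cons (l : List (List ℕ)) (a : ℕ) (w : List ℕ) :
    (l.map (a :: ·)).idxOf (a :: w) = l.idxOf w := by
  induction l with
  | nil => rfl
  | cons x l ih =>
      rw [List.map_cons, List.idxOf_cons, List.idxOf_cons, ih]
      by_cases h : x = w
      · subst h; simp
      · have h1 : ((a :: x : List ℕ) == (a :: w)) = false := by
          simp [h]
        have h2 : ((x : List ℕ) == w) = false := by simp [h]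
        rw [h1, h2]

theorem not_mem_map_cons (l : List (List ℕ)) (a b : ℕ) (w : List ℕ) (h : a ≠ b) :
    (a :: w) ∉ l.map (b :: ·) := by
  simp only [List.mem_map]
  rintro ⟨p, _, hp⟩
  exact h (by injection hp with h1 _; exact h1.symm)

theorem idxOf_block : ∀ (us : List PTree) (i i0 : ℕ) (hi : i0 < us.length)
    (w : List ℕ), w ∈ vertices (us[i0]'hi) →
    (verticesListAux us [] i).idxOf ((i + i0) :: w) =
      sizeList (us.take i0) + (vertices (us[i0]'hi)).idxOf w := by
  intro us
  induction us with
  | nil => intro i i0 hi; simp at hi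
  | cons t ts ih =>
      intro i i0 hi w hw
      match i0 with
      | 0 =>
          simp only [List.getElem_cons_zero] at hw ⊢
          have hmem : (i :: w) ∈ (vertices t).map (i :: ·) := List.mem_map_of_mem hw
          rw [verticesListAux, List.nil_append, verticesAux_single t i, Nat.add_zero,
            idx_append_left hmem,
            idxOf_map_cons, List.take_zero, sizeList, Nat.zero_add]
      | i0 + 1 =>
          simp only [List.getElem_cons_succ] at hw ⊢
          have hnm : ((i + (i0 + 1)) :: w) ∉ (vertices t).map (i :: ·) :=
            not_mem_map_cons _ _ _ _ (by omega)
          rw [verticesListAux, List.nil_append, verticesAux_single t i,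
            idx_append_right hnm _,
            List.length_map, length_vertices, List.take_succ_cons, sizeList,
            show i + (i0 + 1) = (i + 1) + i0 by omega,
            ih (i + 1) i0 (by simpa using hi) w hw]
          omega

theorem getD_length (l : List (List ℕ)) (i : ℕ) :
    (l.getD i []).length = (l.map List.length).getD i 0 := by
  rcases Nat.lt_or_ge i l.length with h | h
  · rw [List.getD_eq_getElem _ _ h, List.getD_eq_getElem _ _ (by simpa using h),
      List.getElem_map]
  · rw [List.getD_eq_default _ _ h, List.getD_eq_default _ _ (by simpa using h)]
    rfl

theorem nonRootVertices_def (us : List PTree) :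
    nonRootVertices (node us) = verticesListAux us [] 0 := rfl

end PTree
namespace PTree

theorem vertices_eq_cons (t : PTree) : vertices t = [] :: nonRootVertices t := by
  obtain ⟨ts⟩ := t
  rw [vertices_def, nonRootVertices_def]

theorem length_nonRootVertices (t : PTree) : (nonRootVertices t).length = size t - 1 := by
  have h := length_vertices t
  rw [vertices_eq_cons] at h
  simp only [List.length_cons] at h
  omega

theorem getD_vertices_mem (t : PTree) (k : ℕ) (hk : k < size t) :
    (vertices t).getD k [] ∈ vertices t := by
  rw [List.getD_eq_getElem _ _ (by rw [length_vertices]; exact hk)]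
  exact List.getElem_mem _

theorem getD_vertices_ne_nil (t : PTree) (k : ℕ) (hk1 : 1 ≤ k) (hk2 : k < size t) :
    (vertices t).getD k [] ≠ [] := by
  obtain ⟨ns⟩ := t
  rw [size_def] at hk2
  obtain ⟨k0, rfl⟩ : ∃ k0, k = k0 + 1 := ⟨k - 1, by omega⟩
  obtain ⟨j2, k2, hj2, hk2', hsum2⟩ := decomp ns k0 (by omega)
  rw [vertices_def, List.getD_cons_succ, hsum2, vertices_access ns 0 j2 k2 hj2 hk2']
  simp

theorem mirrorPath_ne_nil (t : PTree) (v : List ℕ) (hv : v ≠ []) :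
    mirrorPath t v ≠ [] := by
  obtain ⟨ns⟩ := t
  match v with
  | [] => exact absurd rfl hv
  | a :: p =>
      rw [mirrorPath]
      simp

theorem ivl_eq (t : PTree) :
    (internalVertices (rot t)).map List.length = ivl t := rfl

theorem LHS_tree : ∀ (n : ℕ) (M : PTree) (k : ℕ), size M ≤ n → 1 ≤ k → k < size M →
    ((iota (mirror M) (mirroredEnum (mirror M) k)).length : ℤ) = (fT M).getD (k - 1) 0
  | 0, M, k, hn, _, _ => absurd (size_pos M) (by omega)
  | n + 1, node ms, k, hn, hk1, hk2 => by
      rw [size_def] at hn hk2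
      obtain ⟨j, k', hj, hk', hsum⟩ := decomp ms (k - 1) (by omega)
      have hv'mem : (vertices ms[j]).getD k' [] ∈ vertices ms[j] :=
        getD_vertices_mem _ _ hk'
      have hw'mem : mirrorPath ms[j] ((vertices ms[j]).getD k' []) ∈ vertices (mirror ms[j]) :=
        mirrorPath_mem (size ms[j]) ms[j] _ le_rfl hv'mem
      have hi0 : ms.length - 1 - j < (mirrorList ms).length := by
        rw [length_mirrorList]; omega
      have hgetus : (mirrorList ms)[ms.length - 1 - j]'hi0 = mirror ms[j] :=
        getElem_mirrorList ms j hj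
      have hw'mem' : mirrorPath ms[j] ((vertices ms[j]).getD k' [])
          ∈ vertices ((mirrorList ms)[ms.length - 1 - j]'hi0) := by
        rw [hgetus]; exact hw'mem
      have hstep2 : (vertices (node ms)).getD k [] = j :: (vertices ms[j]).getD k' [] := by
        obtain ⟨k0, rfl⟩ : ∃ k0, k = k0 + 1 := ⟨k - 1, by omega⟩
        simp only [Nat.add_sub_cancel] at hsum
        rw [vertices_def, List.getD_cons_succ, hsum, vertices_access ms 0 j k' hj hk',
          Nat.zero_add]
      have hme : mirroredEnum (mirror (node ms)) k =
          (ms.length - 1 - j) :: mirrorPath ms[j] ((vertices ms[j]).getD k' []) := by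
        rw [mirroredEnum, mirror_mirror, hstep2, mirrorPath_cons ms j _ hj]
      have hidx : List.idxOf
            ((ms.length - 1 - j) :: mirrorPath ms[j] ((vertices ms[j]).getD k' []))
            (verticesListAux (mirrorList ms) [] 0) =
          sizeList ((mirrorList ms).take (ms.length - 1 - j)) +
            List.idxOf (mirrorPath ms[j] ((vertices ms[j]).getD k' []))
              (vertices ((mirrorList ms)[ms.length - 1 - j]'hi0)) := by
        have h := idxOf_block (mirrorList ms) 0 (ms.length - 1 - j) hi0 _ hw'mem'
        simpa using h
      have hioto : iota (mirror (node ms)) (mirroredEnum (mirror (node ms)) k) =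
          (internalVertices (rot (node (mirrorList ms)))).getD
            (sizeList ((mirrorList ms).take (ms.length - 1 - j)) +
              List.idxOf (mirrorPath ms[j] ((vertices ms[j]).getD k' []))
                (vertices ((mirrorList ms)[ms.length - 1 - j]'hi0))) [] := by
        rw [iota, hme, show mirror (node ms) = node (mirrorList ms) from by rw [mirror],
          nonRootVertices_def, hidx]
      have hfT : (fT (node ms)).getD (k - 1) 0 =
          if k' = 0 then (ms.length : ℤ) - j - 1
          else (fT ms[j]).getD (k' - 1) 0 + ((ms.length : ℤ) - j) := by
        rw [fT, hsum, fL_getD ms (ms.length : ℤ) j k' hj hk']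
      rcases Nat.eq_zero_or_pos k' with h0 | h0
      · -- k' = 0 : root of subtree
        have hw'nil : mirrorPath ms[j] ((vertices ms[j]).getD k' []) = [] := by
          subst h0
          rw [vertices_eq_cons, List.getD_cons_zero, mirrorPath_nil]
        have hidx0 : List.idxOf (mirrorPath ms[j] ((vertices ms[j]).getD k' []))
            (vertices ((mirrorList ms)[ms.length - 1 - j]'hi0)) = 0 := by
          rw [hw'nil, vertices_eq_cons, idx_cons, if_pos (by simp)]
        rw [hioto, hidx0, Nat.add_zero, getD_length, ivl_eq,
          ivl_access_root (mirrorList ms) (ms.length - 1 - j) hi0, hfT, if_pos h0]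
        omega
      · -- k' ≥ 1 : inner vertex of subtree
        have hv'ne : (vertices ms[j]).getD k' [] ≠ [] :=
          getD_vertices_ne_nil ms[j] k' h0 hk'
        have hw'ne : mirrorPath ms[j] ((vertices ms[j]).getD k' []) ≠ [] :=
          mirrorPath_ne_nil ms[j] _ hv'ne
        have hw'tail : mirrorPath ms[j] ((vertices ms[j]).getD k' [])
            ∈ nonRootVertices (mirror ms[j]) := by
          have h := hw'mem
          rw [vertices_eq_cons] at h
          rcases List.mem_cons.mp h with h | h
          · exact absurd h hw'ne
          · exact h
        have hq : List.idxOf (mirrorPath ms[j] ((vertices ms[j]).getD k' []))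
            (nonRootVertices (mirror ms[j])) < size ms[j] - 1 := by
          have h := idx_lt_length hw'tail
          rw [length_nonRootVertices, size_mirror] at h
          exact h
        have hidx1 : List.idxOf (mirrorPath ms[j] ((vertices ms[j]).getD k' []))
            (vertices ((mirrorList ms)[ms.length - 1 - j]'hi0)) =
            1 + List.idxOf (mirrorPath ms[j] ((vertices ms[j]).getD k' []))
              (nonRootVertices (mirror ms[j])) := by
          rw [hgetus, vertices_eq_cons (mirror ms[j]), idx_cons,
            if_neg (by simp only [beq_iff_eq]; exact fun h => hw'ne h.symm)]
          omega
        have hqus : List.idxOf (mirrorPath ms[j] ((vertices ms[j]).getD k' []))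
            (nonRootVertices (mirror ms[j]))
            < size ((mirrorList ms)[ms.length - 1 - j]'hi0) - 1 := by
          rw [hgetus, size_mirror]; exact hq
        have hszj : size ms[j] ≤ n := by
          have := size_le_sizeList (List.getElem_mem hj)
          omega
        have hIH := LHS_tree n ms[j] k' hszj h0 hk'
        have hiota_inner : iota (mirror ms[j]) (mirroredEnum (mirror ms[j]) k') =
            (internalVertices (rot (mirror ms[j]))).getD
              (List.idxOf (mirrorPath ms[j] ((vertices ms[j]).getD k' []))
                (nonRootVertices (mirror ms[j]))) [] := by
          rw [iota, mirroredEnum, mirror_mirror]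
        rw [hiota_inner, getD_length, ivl_eq] at hIH
        rw [hioto, hidx1, ← Nat.add_assoc, getD_length, ivl_eq,
          ivl_access_inner (mirrorList ms) (ms.length - 1 - j) hi0 _ hqus,
          hfT, if_neg (by omega), hgetus]
        push_cast
        push_cast at hIH
        rw [← hIH]
        have hjm : j < ms.length := hj
        push_cast
        omega

end PTree
-- STATEMENT 12
theorem stmt12 (T : PTree) (hT : 2 ≤ size T) (k : ℕ) (hk1 : 1 ≤ k)
    (hk2 : k ≤ size T - 1) :
    ((iota T (mirroredEnum T k)).length : ℤ) =
      (H (mirror T) k : ℤ) + S (mirror T) k - 1 := by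
  have hsz : size (mirror T) = size T := size_mirror T
  have hklt : k < size (mirror T) := by omega
  have hL := LHS_tree (size (mirror T)) (mirror T) k le_rfl hk1 hklt
  rw [mirror_mirror T] at hL
  have hR := RHS_tree (size (mirror T)) (mirror T) k le_rfl hk1 hklt
  rw [hL]
  linarith [hR]
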